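/- Let G be a connected graph with at least three edges. Then the line graph L(G) is Hamiltonian if and only if G has a dominating closed trail (a closed trail such that every edge of G is incident with at least one vertex of the trail). -/

import Mathlib

open SimpleGraph

namespace Paper

/-- A graph is traceable if it has a hamiltonian path. -/
def Traceable {α : Type*} (G : SimpleGraph α) : Prop :=
  ∃ (a b : α) (p : G.Walk a b), p.IsPath ∧ ∀ w, w ∈ p.support

/-- A graph is hamiltonian if it has a hamiltonian cycle. -/
def HamGraph {α : Type*} (G : SimpleGraph α) : Prop :=
  ∃ (a : α) (p : G.Walk a a), p.IsCycle ∧ ∀ w, w ∈ p.support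

/-- A graph together with its (varying) vertex type. -/
def GraphSys : Type 1 := Σ V : Type, SimpleGraph V

/-- One application of the line-graph operator. -/
def lineStep (p : GraphSys) : GraphSys := ⟨p.2.edgeSet, p.2.lineGraph⟩

/-- The `n`-th iterated line graph (with `L^0(G) = G`). -/
def iterLine (p : GraphSys) (n : ℕ) : GraphSys := lineStep^[n] p

/-- The hamiltonian path index: the least `n` with `L^n(G)` traceable. -/
noncomputable def hp {V : Type} (G : SimpleGraph V) : ℕ :=
  sInf {n | Traceable (iterLine ⟨V, G⟩ n).2}

/-- The hamiltonian index: the least `n` with `L^n(G)` hamiltonian. -/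
noncomputable def hIndex {V : Type} (G : SimpleGraph V) : ℕ :=
  sInf {n | HamGraph (iterLine ⟨V, G⟩ n).2}

/-- Degree of `v` in a subgraph `H` (number of neighbours). -/
noncomputable def sdeg {V : Type*} {G : SimpleGraph V} (H : G.Subgraph) (v : V) : ℕ :=
  (H.neighborSet v).ncard

/-- Degree of `v` in `G` (number of neighbours). -/
noncomputable def gdeg {V : Type*} (G : SimpleGraph V) (v : V) : ℕ :=
  (G.neighborSet v).ncard

/-- `Ē(H)`: the set of edges of `G` incident with a vertex of `H`. -/
def barE {V : Type*} (G : SimpleGraph V) (H : G.Subgraph) : Set (Sym2 V) :=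
  {e | e ∈ G.edgeSet ∧ ∃ v ∈ H.verts, v ∈ e}

/-- A circuit: a connected subgraph in which every vertex has even degree
(`K₁` counts as a circuit). -/
def IsCircuit {V : Type*} {G : SimpleGraph V} (H : G.Subgraph) : Prop :=
  H.Connected ∧ ∀ v, Even (sdeg H v)

/-- A branch of `G`: a nontrivial path whose ends have degree `≠ 2` and whose
internal vertices have degree `2`. -/
def IsBranch {V : Type*} (G : SimpleGraph V) {u v : V} (p : G.Walk u v) : Prop :=
  p.IsPath ∧ 0 < p.length ∧ gdeg G u ≠ 2 ∧ gdeg G v ≠ 2 ∧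
    ∀ w ∈ p.support, w ≠ u → w ≠ v → gdeg G w = 2

/-- The family `EUP_k(G)` of subgraphs satisfying (I'), (II), (III), (IV), (V'). -/
def EUP {V : Type*} (G : SimpleGraph V) (k : ℕ) : Set (G.Subgraph) :=
  {H | {v | Odd (sdeg H v)}.ncard ≤ 2 ∧
    (∀ v ∈ H.verts, H.neighborSet v = ∅ → 3 ≤ gdeg G v) ∧
    (∀ v, 3 ≤ gdeg G v → v ∈ H.verts) ∧
    (∀ H1 : G.Subgraph, H1 ≤ H → H1.verts.Nonempty → (H.verts \ H1.verts).Nonempty →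
      ∃ a ∈ H1.verts, ∃ b ∈ H.verts \ H1.verts, G.dist a b ≤ k - 1) ∧
    (∀ (u v : V) (p : G.Walk u v), IsBranch G p →
      (∀ e ∈ p.edges, e ∉ H.edgeSet) → p.length ≤ k + 1) ∧
    (∀ (u v : V) (p : G.Walk u v), IsBranch G p → (∃ w ∈ p.support, gdeg G w = 1) →
      (∀ e ∈ p.edges, e ∉ H.edgeSet) → p.length ≤ k)}

/-- The family `EU_k(G)` of subgraphs satisfying (I), (II), (III), (IV), (V). -/
def EU {V : Type*} (G : SimpleGraph V) (k : ℕ) : Set (G.Subgraph) :=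
  {H | (∀ v, Even (sdeg H v)) ∧
    (∀ v ∈ H.verts, H.neighborSet v = ∅ → 3 ≤ gdeg G v) ∧
    (∀ v, 3 ≤ gdeg G v → v ∈ H.verts) ∧
    (∀ H1 : G.Subgraph, H1 ≤ H → H1.verts.Nonempty → (H.verts \ H1.verts).Nonempty →
      ∃ a ∈ H1.verts, ∃ b ∈ H.verts \ H1.verts, G.dist a b ≤ k - 1) ∧
    (∀ (u v : V) (p : G.Walk u v), IsBranch G p →
      (∀ e ∈ p.edges, e ∉ H.edgeSet) → p.length ≤ k + 1) ∧
    (∀ (u v : V) (p : G.Walk u v), IsBranch G p → (∃ w ∈ p.support, gdeg G w = 1) →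
      p.length ≤ k)}

section Aux
variable {α : Type*} {H : SimpleGraph α}

/-- Walk from a chain of adjacencies. -/
def chainWalk : (a : α) → (l : List α) → List.Chain H.Adj a l → H.Walk a (l.getLastD a)
  | _, [], _ => Walk.nil
  | a, b :: l, h =>
    (Walk.cons (List.chain_cons.mp h).1 (chainWalk b l (List.chain_cons.mp h).2)).copy rfl
      (List.getLastD_cons (a := a) (b := b) (l := l)).symm

@[simp] lemma chainWalk_support : ∀ (a : α) (l : List α) (h : List.Chain H.Adj a l),
    (chainWalk a l h).support = a :: l
  | _, [], _ => rfl
  | a, b :: l, h => by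
    simp [chainWalk, chainWalk_support b l (List.chain_cons.mp h).2]

/-- In a walk with nodup support, an edge containing the start vertex determines
the second vertex. -/
lemma edge_start : ∀ {u v : α} (w : H.Walk u v), w.support.Nodup → ∀ z, s(u, z) ∈ w.edges →
    w.support.tail.head? = some z
  | _, _, Walk.nil, _, z, he => by simp at he
  | u, v, Walk.cons (v := c) hadj q, hnd, z, he => by
    rw [Walk.edges_cons, List.mem_cons] at he
    rcases he with he | he
    · have hzc : z = c := by
        rcases Sym2.eq_iff.mp he with ⟨_, h⟩ | ⟨h1, _⟩
        · exact h
        · exact absurd h1 hadj.ne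
      subst hzc
      rw [Walk.support_cons, List.tail_cons, q.support_eq_cons]
      rfl
    · exfalso
      have hu : u ∈ q.support := q.fst_mem_support_of_mem_edges he
      rw [Walk.support_cons, List.nodup_cons] at hnd
      exact hnd.1 hu

lemma getLast_ne_head {l : List α} (hn : l.Nodup) (h2 : 2 ≤ l.length) (h : l ≠ []) :
    l.getLast h ≠ l.head h := by
  intro he
  have : l.getLast h = l.get ⟨l.length - 1, by omega⟩ := by simp [List.getLast_eq_getElem]
  have hh : l.head h = l.get ⟨0, by omega⟩ := by
    cases l with
    | nil => simp at h
    | cons a t => rfl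
  rw [this, hh] at he
  have := (hn.get_inj_iff.mp he)
  simp only [Fin.mk.injEq] at this
  omega

/-- From a nodup cyclically-adjacent covering list of length ≥ 3, get a Hamilton cycle. -/
lemma hamOfList (l : List α) (hne : l ≠ []) (hnd : l.Nodup) (h3 : 3 ≤ l.length)
    (hch : List.Chain' H.Adj l) (hwrap : H.Adj (l.getLast hne) (l.head hne))
    (hcov : ∀ x, x ∈ l) : HamGraph H := by
  classical
  obtain ⟨x, l', rfl⟩ : ∃ x l', l = x :: l' := ⟨l.head hne, l.tail, (List.cons_head_tail hne).symm⟩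
  have hl' : l' ≠ [] := by
    intro h; subst h; simp at h3
  have hch' : List.Chain H.Adj x l' := hch
  obtain ⟨p, hp⟩ : ∃ p : H.Walk x (l'.getLastD x), p = chainWalk x l' hch' := ⟨_, rfl⟩
  have hbl : (x :: l').getLast hne = l'.getLastD x := by
    simp [List.getLastD_eq_getLast?, List.getLast?_eq_getLast hl', List.getLast_cons hl']
  have hsupp : p.support = x :: l' := by rw [hp]; exact chainWalk_support x l' hch'
  have hpath : p.IsPath := Walk.IsPath.mk' (by rw [hsupp]; exact hnd)
  have hadj : H.Adj x (l'.getLastD x) := by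
    rw [hbl] at hwrap; exact hwrap.symm
  have hnotedge : s(x, l'.getLastD x) ∉ p.edges := by
    intro hmem
    have hh := edge_start p (by rw [hsupp]; exact hnd) _ hmem
    rw [hsupp] at hh
    simp only [List.tail_cons] at hh
    obtain ⟨c, t, rfl⟩ : ∃ c t, l' = c :: t := ⟨l'.head hl', l'.tail, (List.cons_head_tail hl').symm⟩
    have hcd : (c :: t).getLastD x = c := by
      simpa using hh.symm
    have ht : t ≠ [] := by
      intro ht; subst ht; simp at h3
    have hlast : (c :: t).getLastD x = t.getLast ht := by
      rw [List.getLastD_eq_getLast?, List.getLast?_eq_getLast (by simp), List.getLast_cons ht]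
      simp
    have hct : c ∈ t := by rw [hcd] at hlast; exact hlast ▸ List.getLast_mem ht
    have hnd' := (List.nodup_cons.mp hnd).2
    exact (List.nodup_cons.mp hnd').1 hct
  refine ⟨x, Walk.cons hadj p.reverse, ?_, ?_⟩
  · rw [Walk.cons_isCycle_iff]
    refine ⟨hpath.reverse, ?_⟩
    rw [Walk.edges_reverse, List.mem_reverse]
    exact hnotedge
  · intro w
    rw [Walk.support_cons, Walk.support_reverse, hsupp]
    right
    exact List.mem_reverse.mpr (hcov w)



open scoped Classical in
/-- Emit, walking along `w`, at each visited vertex the remaining edges of `S`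
incident with it, interleaved with the edges of the walk itself. -/
noncomputable def emit {V : Type*} {G : SimpleGraph V} :
    {x y : V} → G.Walk x y → List (Sym2 V) → List (Sym2 V)
  | x, _, .nil, S => S.filter (fun e => decide (x ∈ e))
  | x, _, .cons (v := c) _ w, S =>
      S.filter (fun e => decide (x ∈ e)) ++ s(x, c) :: emit w (S.filter (fun e => decide (x ∉ e)))

variable {V : Type*} {G : SimpleGraph V}

open scoped Classical

lemma mem_emit_of_mem_edges : ∀ {x y : V} (w : G.Walk x y) (S : List (Sym2 V)),
    ∀ e ∈ w.edges, e ∈ emit w S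
  | _, _, .nil, S => by simp
  | x, y, .cons (v := c) h w, S => by
    intro e he
    rw [Walk.edges_cons, List.mem_cons] at he
    simp only [emit, List.mem_append, List.mem_cons]
    rcases he with rfl | he
    · exact Or.inr (Or.inl rfl)
    · exact Or.inr (Or.inr (mem_emit_of_mem_edges w _ e he))

lemma mem_emit_of_dom : ∀ {x y : V} (w : G.Walk x y) (S : List (Sym2 V)),
    ∀ e ∈ S, (∃ z ∈ w.support, z ∈ e) → e ∈ emit w S
  | x, _, .nil, S => by
    intro e he ⟨z, hz, hze⟩
    simp only [Walk.support_nil, List.mem_singleton] at hz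
    subst hz
    simp only [emit, List.mem_filter, decide_eq_true_iff]
    exact ⟨he, hze⟩
  | x, y, .cons (v := c) h w, S => by
    intro e he ⟨z, hz, hze⟩
    simp only [emit, List.mem_append, List.mem_cons]
    by_cases hxe : x ∈ e
    · exact Or.inl (List.mem_filter.mpr ⟨he, by simpa using hxe⟩)
    · refine Or.inr (Or.inr (mem_emit_of_dom w _ e ?_ ⟨z, ?_, hze⟩))
      · exact List.mem_filter.mpr ⟨he, by simpa using hxe⟩
      · rw [Walk.support_cons, List.mem_cons] at hz
        rcases hz with rfl | hz
        · exact absurd hze hxe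
        · exact hz

lemma emit_subset : ∀ {x y : V} (w : G.Walk x y) (S : List (Sym2 V)),
    ∀ e ∈ emit w S, e ∈ S ∨ e ∈ w.edges
  | x, _, .nil, S => by
    intro e he
    exact Or.inl (List.mem_filter.mp he).1
  | x, y, .cons (v := c) h w, S => by
    intro e he
    simp only [emit, List.mem_append, List.mem_cons] at he
    rcases he with he | rfl | he
    · exact Or.inl (List.mem_filter.mp he).1
    · exact Or.inr (by simp)
    · rcases emit_subset w _ e he with h1 | h1
      · exact Or.inl (List.mem_filter.mp h1).1
      · exact Or.inr (by simp [h1])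

lemma emit_nodup : ∀ {x y : V} (w : G.Walk x y) (S : List (Sym2 V)), S.Nodup →
    (∀ e ∈ S, e ∉ w.edges) → w.IsTrail → (emit w S).Nodup
  | x, _, .nil, S, hS, _, _ => hS.filter _
  | x, y, .cons (v := c) h w, S, hS, hdisj, htrail => by
    simp only [emit]
    rw [List.nodup_append]
    refine ⟨hS.filter _, ?_, ?_⟩
    · rw [List.nodup_cons]
      constructor
      · intro hmem
        rcases emit_subset w _ _ hmem with h1 | h1
        · exact hdisj _ (List.mem_of_mem_filter h1) (by simp)
        · have := htrail.edges_nodup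
          rw [Walk.edges_cons, List.nodup_cons] at this
          exact this.1 h1
      · exact emit_nodup w _ (hS.filter _)
          (fun e he hed => hdisj e (List.mem_of_mem_filter he)
            (by rw [Walk.edges_cons]; exact List.mem_cons_of_mem _ hed))
          htrail.of_cons
    · intro e he f hf heq
      subst heq
      have hxe : x ∈ e := by
        have := (List.mem_filter.mp he).2; simpa using this
      have heS : e ∈ S := List.mem_of_mem_filter he
      rw [List.mem_cons] at hf
      rcases hf with rfl | hf
      · exact hdisj _ heS (by simp)
      · rcases emit_subset w _ _ hf with h1 | h1
        · have : x ∉ e := by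
            have := (List.mem_filter.mp h1).2; simpa using this
          exact this hxe
        · exact hdisj e heS (by rw [Walk.edges_cons]; exact List.mem_cons_of_mem _ h1)

lemma emit_head : ∀ {x y : V} (w : G.Walk x y) (S : List (Sym2 V)),
    ∀ e, (emit w S).head? = some e → x ∈ e
  | x, _, .nil, S => by
    intro e he
    have hmem : e ∈ S.filter (fun e => decide (x ∈ e)) := by
      exact List.mem_of_mem_head? he
    have := (List.mem_filter.mp hmem).2; simpa using this
  | x, y, .cons (v := c) h w, S => by
    intro e he
    simp only [emit] at he
    rcases hA : S.filter (fun e => decide (x ∈ e)) with _ | ⟨a, A⟩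
    · rw [hA, List.nil_append, List.head?_cons, Option.some_inj] at he
      subst he; simp
    · rw [hA, List.cons_append, List.head?_cons, Option.some_inj] at he
      have hmem : e ∈ S.filter (fun e => decide (x ∈ e)) := by rw [hA, ← he]; simp
      have := (List.mem_filter.mp hmem).2; simpa using this

lemma emit_ne_nil_cons {x c y : V} (h : G.Adj x c) (w : G.Walk c y) (S : List (Sym2 V)) :
    emit (Walk.cons h w) S ≠ [] := by
  simp only [emit]
  simp

lemma emit_getLast : ∀ {x y : V} (w : G.Walk x y) (S : List (Sym2 V)),
    ∀ e, (emit w S).getLast? = some e → y ∈ e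
  | x, _, .nil, S => by
    intro e he
    have hmem : e ∈ S.filter (fun e => decide (x ∈ e)) := List.mem_of_mem_getLast? he
    have := (List.mem_filter.mp hmem).2; simpa using this
  | x, y, .cons (v := c) h w, S => by
    intro e he
    simp only [emit] at he
    rcases hw : emit w (S.filter (fun e => decide (x ∉ e))) with _ | ⟨a, A⟩
    · cases w with
      | nil =>
        rw [hw, List.getLast?_concat, Option.some_inj] at he
        subst he; simp
      | cons h' w' => exact absurd hw (emit_ne_nil_cons h' w' _)
    · refine emit_getLast w (S.filter (fun e => decide (x ∉ e))) e ?_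
      rw [hw]
      rw [hw, List.getLast?_append] at he
      rw [List.getLast?_eq_getLast (l := s(x, c) :: a :: A) (by simp)] at he
      have he' : (s(x, c) :: a :: A).getLast (by simp) = e := by simpa using he
      rw [List.getLast_cons (by simp : a :: A ≠ [])] at he'
      rw [List.getLast?_eq_getLast (by simp), Option.some_inj]
      exact he'

/-- The share relation on edges. -/
def Shares {V : Type*} (e f : Sym2 V) : Prop := ∃ v, v ∈ e ∧ v ∈ f

lemma chain'_of_common {l : List (Sym2 V)} {x : V} (h : ∀ e ∈ l, x ∈ e) :
    List.Chain' Shares l := by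
  rw [List.Chain', List.isChain_iff_getElem]
  intro i hi
  exact ⟨x, h _ (List.getElem_mem _), h _ (List.getElem_mem _)⟩

lemma chain'_and_ne {α : Type*} {R : α → α → Prop} {l : List α} (hc : List.Chain' R l)
    (hn : l.Nodup) : List.Chain' (fun a b => a ≠ b ∧ R a b) l := by
  rw [List.Chain', List.isChain_iff_getElem] at hc ⊢
  intro i hi
  refine ⟨?_, hc i hi⟩
  intro hEq
  have := hn.getElem_inj_iff.mp hEq
  omega

lemma emit_chain' : ∀ {x y : V} (w : G.Walk x y) (S : List (Sym2 V)),
    List.Chain' Shares (emit w S)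
  | x, _, .nil, S => by
    refine chain'_of_common (x := x) ?_
    intro e he
    have := (List.mem_filter.mp he).2; simpa using this
  | x, y, .cons (v := c) h w, S => by
    simp only [emit]
    rw [List.Chain', List.isChain_append]
    refine ⟨?_, ?_, ?_⟩
    · refine chain'_of_common (x := x) ?_
      intro e he
      have := (List.mem_filter.mp he).2; simpa using this
    · rw [List.isChain_cons]
      refine ⟨?_, emit_chain' w _⟩
      intro f hf
      have hcf : c ∈ f := emit_head w _ f hf
      exact ⟨c, by simp, hcf⟩
    · intro p hp q hq
      have hxp : x ∈ p := by
        have hm := List.mem_of_mem_getLast? hp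
        have := (List.mem_filter.mp hm).2; simpa using this
      have hq' : q = s(x, c) := by
        simp only [List.head?_cons, Option.mem_def, Option.some_inj] at hq
        exact hq.symm
      exact ⟨x, hxp, by simp [hq']⟩




/-- Step relation: consecutive chosen vertices are equal or joined by the labelled edge. -/
def StepRel (G : SimpleGraph V) (p q : V × Sym2 V) : Prop :=
  p.1 = q.1 ∨ (G.Adj p.1 q.1 ∧ s(p.1, q.1) = q.2)

open scoped Classical in
/-- Build a walk from a chain of steps. -/
noncomputable def mkWalk : (a : V) → (d : Sym2 V) → (l : List (V × Sym2 V)) →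
    List.Chain (StepRel G) (a, d) l → G.Walk a ((l.map Prod.fst).getLastD a)
  | _, _, [], _ => Walk.nil
  | a, d, (b, e) :: l, h =>
    if heq : a = b then
      ((mkWalk b e l (List.chain_cons.mp h).2).copy heq.symm rfl).copy rfl
        (List.getLastD_cons (a := a) (b := b) (l := l.map Prod.fst)).symm
    else
      (Walk.cons ((List.chain_cons.mp h).1.resolve_left heq).1
        (mkWalk b e l (List.chain_cons.mp h).2)).copy rfl
        (List.getLastD_cons (a := a) (b := b) (l := l.map Prod.fst)).symm

lemma mkWalk_support_mem : ∀ (a : V) (d : Sym2 V) (l : List (V × Sym2 V))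
    (h : List.Chain (StepRel G) (a, d) l),
    a ∈ (mkWalk a d l h).support ∧ ∀ p ∈ l, p.1 ∈ (mkWalk a d l h).support
  | a, d, [], h => by
    refine ⟨?_, by simp⟩
    show a ∈ (Walk.nil : G.Walk a a).support
    simp
  | a, d, (b, e) :: l, h => by
    have ih := mkWalk_support_mem b e l (List.chain_cons.mp h).2
    by_cases heq : a = b
    · subst heq
      simp only [mkWalk]
      rw [dite_true]
      constructor
      · simpa using ih.1
      · intro p hp
        rw [List.mem_cons] at hp
        rcases hp with rfl | hp
        · simpa using ih.1
        · simpa using ih.2 p hp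
    · simp only [mkWalk]
      rw [dif_neg heq]
      constructor
      · simp
      · intro p hp
        rw [List.mem_cons] at hp
        rcases hp with rfl | hp
        · simp only [Walk.support_copy, Walk.support_cons, List.mem_cons]
          exact Or.inr ih.1
        · simp only [Walk.support_copy, Walk.support_cons, List.mem_cons]
          exact Or.inr (ih.2 p hp)

lemma mkWalk_edges_sublist : ∀ (a : V) (d : Sym2 V) (l : List (V × Sym2 V))
    (h : List.Chain (StepRel G) (a, d) l),
    (mkWalk a d l h).edges.Sublist (l.map Prod.snd)
  | a, d, [], h => by
    show (Walk.nil : G.Walk a a).edges.Sublist []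
    simp
  | a, d, (b, e) :: l, h => by
    have ih := mkWalk_edges_sublist b e l (List.chain_cons.mp h).2
    by_cases heq : a = b
    · subst heq
      simp only [mkWalk]
      rw [dite_true]
      simp only [Walk.edges_copy, List.map_cons]
      exact ih.cons e
    · simp only [mkWalk]
      rw [dif_neg heq]
      simp only [Walk.edges_copy, Walk.edges_cons, List.map_cons]
      have hEq : s(a, b) = e := ((List.chain_cons.mp h).1.resolve_left heq).2
      rw [hEq]
      exact ih.cons₂ e

/-- Existence of a step list realizing a share-chain of edges. -/
lemma exists_steps : ∀ (es : List (Sym2 V)), es ≠ [] → (∀ e ∈ es, e ∈ G.edgeSet) →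
    List.Chain' (fun e f => ∃ v, v ∈ e ∧ v ∈ f) es →
    ∀ (a : V), (∀ e ∈ es.head?, a ∈ e) → ∀ (b : V), (∀ e ∈ es.getLast?, b ∈ e) →
    ∃ steps : List (V × Sym2 V), steps.map Prod.snd = es ∧
      (∀ d, List.Chain (StepRel G) (a, d) steps) ∧
      (∀ p ∈ steps, p.1 ∈ p.2) ∧ (steps.map Prod.fst).getLastD a = b := by
  intro es
  induction es with
  | nil => intro h; exact absurd rfl h
  | cons e es ih =>
    intro _ hedge hch a ha b hb
    have hae : a ∈ e := ha e (by simp)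
    have hstep : ∀ (z : V), z ∈ e → ∀ d, StepRel G (a, d) (z, e) := by
      intro z hz d
      by_cases haz : a = z
      · exact Or.inl haz
      · refine Or.inr ⟨?_, (Sym2.mem_and_mem_iff haz).mp ⟨hae, hz⟩ ▸ ?_⟩
        · have he' : e = s(a, z) := (Sym2.mem_and_mem_iff haz).mp ⟨hae, hz⟩
          rw [← SimpleGraph.mem_edgeSet, ← he']
          exact hedge e (by simp)
        · rfl
    cases es with
    | nil =>
      have hbe : b ∈ e := hb e (by simp)
      refine ⟨[(b, e)], by simp, fun d => List.Chain.cons (hstep b hbe d) (List.Chain.nil), ?_, by simp⟩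
      intro p hp
      rw [List.mem_singleton] at hp
      subst hp
      exact hbe
    | cons f es' =>
      have hshare : ∃ v, v ∈ e ∧ v ∈ f := (List.isChain_cons_cons.mp hch).1
      obtain ⟨w, hwe, hwf⟩ := hshare
      have hch' : List.Chain' (fun e f => ∃ v, v ∈ e ∧ v ∈ f) (f :: es') :=
        (List.isChain_cons_cons.mp hch).2
      obtain ⟨steps', hmap, hchain, hmem, hlast⟩ :=
        ih (by simp) (fun e' he' => hedge e' (by simp [he'])) hch' w
          (by intro e' he'; simp only [List.head?_cons, Option.mem_def, Option.some_inj] at he'; exact he' ▸ hwf)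
          b (by intro e' he'; refine hb e' ?_; rw [List.getLast?_cons_cons]; exact he')
      refine ⟨(w, e) :: steps', by simp [hmap], fun d => List.Chain.cons (hstep w hwe d) (hchain e), ?_, ?_⟩
      · intro p hp
        rw [List.mem_cons] at hp
        rcases hp with rfl | hp
        · exact hwe
        · exact hmem p hp
      · rw [List.map_cons, List.getLastD_cons]
        exact hlast


end Aux

/-- Harary–Nash-Williams: `L(G)` is hamiltonian iff `G` has a dominating closed trail. -/
theorem stmt0 {V : Type*} (G : SimpleGraph V) (hG : G.Connected)
    (h3 : 3 ≤ G.edgeSet.ncard) :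
    HamGraph G.lineGraph ↔
      ∃ (u : V) (T : G.Walk u u), T.IsTrail ∧
        ∀ e ∈ G.edgeSet, ∃ w ∈ T.support, w ∈ e := by
  classical
  constructor
  · -- forward direction: Hamiltonian line graph gives dominating closed trail
    rintro ⟨a, c, hcyc, hcov⟩
    have hlen : 3 ≤ c.length := hcyc.three_le_length
    have hsup : c.support = a :: c.support.tail := c.support_eq_cons
    have htlen : c.support.tail.length = c.length := by
      rw [List.length_tail, c.length_support]
      omega
    have htne : c.support.tail ≠ [] := by
      intro h
      rw [h] at htlen
      simp at htlen
      omega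
    obtain ⟨b, t', ht'⟩ : ∃ b t', c.support.tail = b :: t' :=
      ⟨_, _, (List.cons_head_tail htne).symm⟩
    have htlast? : c.support.tail.getLast? = some a := by
      have h1 : c.support.getLast? = some a := by
        rw [List.getLast?_eq_getLast (by simp), c.getLast_support]
      rw [hsup, ht', List.getLast?_cons_cons] at h1
      rw [ht']
      exact h1
    have htlast : c.support.tail.getLast htne = a := by
      have h4 := List.getLast?_eq_getLast htne
      rw [htlast?] at h4
      exact (Option.some_inj.mp h4).symm
    have htsplit : c.support.tail.dropLast ++ [a] = c.support.tail := by
      have h2 := List.dropLast_append_getLast htne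
      rw [htlast] at h2
      exact h2
    have htnd : c.support.tail.Nodup := hcyc.support_nodup
    have hdl : c.support.tail.dropLast.Nodup ∧ a ∉ c.support.tail.dropLast := by
      rw [← htsplit, List.nodup_append] at htnd
      exact ⟨htnd.1, fun h => htnd.2.2 a h a (by simp) rfl⟩
    set l : List G.edgeSet := a :: c.support.tail.dropLast with hl
    have hlnd : l.Nodup := List.nodup_cons.mpr ⟨hdl.2, hdl.1⟩
    have hsup2 : c.support = l ++ [a] := by
      rw [hsup, hl, ← htsplit]
      simp
    have hchsup : List.Chain' G.lineGraph.Adj (l ++ [a]) := by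
      rw [← hsup2]; exact c.isChain_adj_support
    rw [List.Chain', List.isChain_append] at hchsup
    obtain ⟨hchl, -, hwrapl⟩ := hchsup
    have hlcov : ∀ x : G.edgeSet, x ∈ l := by
      intro x
      have := hcov x
      rw [hsup2, List.mem_append] at this
      rcases this with h | h
      · exact h
      · rw [List.mem_singleton] at h
        rw [h, hl]
        simp
    have hllen : 3 ≤ l.length := by
      rw [hl, List.length_cons, List.length_dropLast, htlen]
      omega
    -- pass to lists of raw edges
    set rest : List (Sym2 V) := c.support.tail.dropLast.map Subtype.val with hrest
    have hrestlen : 2 ≤ rest.length := by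
      rw [hrest, List.length_map, List.length_dropLast, htlen]
      omega
    have hrestne : rest ≠ [] := by
      intro h; rw [h] at hrestlen; simp at hrestlen
    have hmapval : l.map Subtype.val = (a : Sym2 V) :: rest := by
      rw [hl, hrest, List.map_cons]
    have hesnd : ((a : Sym2 V) :: rest).Nodup := by
      rw [← hmapval]
      exact hlnd.map Subtype.val_injective
    -- chain of shares on the raw list
    have hshares : List.Chain' Shares ((a : Sym2 V) :: rest) := by
      rw [← hmapval, List.Chain', List.isChain_map]
      refine hchl.imp ?_
      intro e f hef
      obtain ⟨-, v, hv1, hv2⟩ := lineGraph_adj_iff_exists.mp hef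
      exact ⟨v, hv1, hv2⟩
    have hsharewrap : Shares (rest.getLast hrestne) (a : Sym2 V) := by
      have h1 : G.lineGraph.Adj (l.getLast (by rw [hl]; simp)) a := by
        refine hwrapl _ ?_ a (by simp)
        rw [List.getLast?_eq_getLast (by rw [hl]; simp)]
        rfl
      obtain ⟨-, v, hv1, hv2⟩ := lineGraph_adj_iff_exists.mp h1
      refine ⟨v, ?_, hv2⟩
      have : (rest.getLast hrestne) = ((l.getLast (by rw [hl]; simp) : G.edgeSet) : Sym2 V) := by
        have h2 := List.getLast?_map (f := (Subtype.val : G.edgeSet → Sym2 V)) (l := l)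
        rw [hmapval] at h2
        rw [List.getLast?_eq_getLast (by simp : (a : Sym2 V) :: rest ≠ []),
          List.getLast?_eq_getLast (by rw [hl]; simp : l ≠ [])] at h2
        simp only [Option.map_some] at h2
        have h3 : ((a : Sym2 V) :: rest).getLast (by simp) = rest.getLast hrestne :=
          List.getLast_cons hrestne
        rw [h3] at h2
        exact (Option.some_inj.mp h2)
      rw [this]
      exact hv1
    -- the rotated list
    set rot : List (Sym2 V) := rest ++ [(a : Sym2 V)] with hrot
    have hrotne : rot ≠ [] := by rw [hrot]; simp
    have hrotedge : ∀ e ∈ rot, e ∈ G.edgeSet := by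
      intro e he
      rw [hrot, List.mem_append] at he
      rcases he with he | he
      · rw [hrest] at he
        obtain ⟨y, -, rfl⟩ := List.mem_map.mp he
        exact y.2
      · rw [List.mem_singleton] at he
        rw [he]
        exact a.2
    have hrotch : List.Chain' Shares rot := by
      rw [hrot, List.Chain', List.isChain_append]
      refine ⟨(List.isChain_cons.mp hshares).2, List.isChain_singleton _, ?_⟩
      intro x hx y hy
      rw [List.getLast?_eq_getLast hrestne, Option.mem_def, Option.some_inj] at hx
      rw [List.head?_cons, Option.mem_def, Option.some_inj] at hy
      rw [← hx, ← hy]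
      exact hsharewrap
    -- choose the starting shared vertex
    obtain ⟨f, rest', hrestsplit⟩ : ∃ f rest', rest = f :: rest' :=
      ⟨rest.head hrestne, rest.tail, (List.cons_head_tail hrestne).symm⟩
    have hv0 : ∃ v, v ∈ (a : Sym2 V) ∧ v ∈ f := by
      have := (List.isChain_cons.mp hshares).1 f (by rw [hrestsplit]; simp)
      exact this
    obtain ⟨v0, hv0a, hv0f⟩ := hv0
    have hrothead : ∀ e ∈ rot.head?, v0 ∈ e := by
      intro e he
      rw [hrot, hrestsplit, List.cons_append, List.head?_cons, Option.mem_def,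
        Option.some_inj] at he
      rw [← he]
      exact hv0f
    have hrotlast : ∀ e ∈ rot.getLast?, v0 ∈ e := by
      intro e he
      rw [hrot, List.getLast?_concat, Option.mem_def, Option.some_inj] at he
      rw [← he]
      exact hv0a
    obtain ⟨steps, hsteps_snd, hsteps_chain, hsteps_mem, hsteps_last⟩ :=
      exists_steps (G := G) rot hrotne hrotedge hrotch v0 hrothead v0 hrotlast
    -- build the trail
    refine ⟨v0, (mkWalk v0 (a : Sym2 V) steps (hsteps_chain _)).copy rfl hsteps_last, ?_, ?_⟩
    · constructor
      rw [Walk.edges_copy]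
      refine List.Nodup.sublist (mkWalk_edges_sublist v0 _ steps (hsteps_chain _)) ?_
      rw [hsteps_snd, hrot]
      rw [List.nodup_append]
      have h1 := List.nodup_cons.mp hesnd
      exact ⟨h1.2, List.nodup_singleton _, fun x hx y hy hxy =>
        h1.1 (by subst hxy; exact (List.mem_singleton.mp hy) ▸ hx)⟩
    · intro e he
      have heL : e ∈ rot := by
        have hel : (⟨e, he⟩ : G.edgeSet) ∈ l := hlcov ⟨e, he⟩
        have : e ∈ (a : Sym2 V) :: rest := by
          rw [← hmapval]
          exact List.mem_map.mpr ⟨⟨e, he⟩, hel, rfl⟩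
        rw [List.mem_cons] at this
        rcases this with h | h
        · rw [hrot, h]; simp
        · rw [hrot]; exact List.mem_append_left _ h
      rw [← hsteps_snd] at heL
      obtain ⟨p, hp, hpe⟩ := List.mem_map.mp heL
      refine ⟨p.1, ?_, hpe ▸ hsteps_mem p hp⟩
      rw [Walk.support_copy]
      exact (mkWalk_support_mem v0 _ steps (hsteps_chain _)).2 p hp
  · -- backward direction: dominating closed trail gives Hamiltonian line graph
    rintro ⟨u, T, htrail, hdom⟩
    have hfin : G.edgeSet.Finite := by
      by_contra hinf
      have := Set.Infinite.ncard hinf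
      omega
    set F0 : List (Sym2 V) := hfin.toFinset.toList.filter (fun e => decide (e ∉ T.edges)) with hF0
    have hF0mem : ∀ e, e ∈ F0 ↔ e ∈ G.edgeSet ∧ e ∉ T.edges := by
      intro e
      rw [hF0, List.mem_filter, Finset.mem_toList, hfin.mem_toFinset]
      simp
    have hF0nd : F0.Nodup := (Finset.nodup_toList _).filter _
    set L : List (Sym2 V) := emit T F0 with hL
    have hLsub : ∀ e ∈ L, e ∈ G.edgeSet := by
      intro e he
      rcases emit_subset T F0 e he with h1 | h1
      · exact ((hF0mem e).mp h1).1
      · exact T.edges_subset_edgeSet h1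
    have hLcov : ∀ e ∈ G.edgeSet, e ∈ L := by
      intro e he
      by_cases het : e ∈ T.edges
      · exact mem_emit_of_mem_edges T F0 e het
      · refine mem_emit_of_dom T F0 e ((hF0mem e).mpr ⟨he, het⟩) ?_
        obtain ⟨w, hw, hwe⟩ := hdom e he
        exact ⟨w, hw, hwe⟩
    have hLnd : L.Nodup :=
      emit_nodup T F0 hF0nd (fun e he => ((hF0mem e).mp he).2) htrail
    have hLch : List.Chain' Shares L := emit_chain' T F0
    have hLne : L ≠ [] := by
      have hne : G.edgeSet.Nonempty := Set.nonempty_of_ncard_ne_zero (by omega)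
      obtain ⟨e, he⟩ := hne
      exact List.ne_nil_of_mem (hLcov e he)
    have hL3 : 3 ≤ L.length := by
      have hEq : G.edgeSet = ↑L.toFinset := by
        ext e
        rw [Finset.mem_coe, List.mem_toFinset]
        exact ⟨fun he => hLcov e he, fun he => hLsub e he⟩
      rw [hEq, Set.ncard_coe_finset, List.toFinset_card_of_nodup hLnd] at h3
      exact h3
    have hhead : u ∈ L.head hLne := by
      refine emit_head T F0 _ ?_
      rw [List.head?_eq_head hLne]
    have hlast : u ∈ L.getLast hLne := by
      refine emit_getLast T F0 _ ?_
      rw [List.getLast?_eq_getLast hLne]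
    -- lift to the subtype
    set L' : List G.edgeSet := L.pmap (fun e he => (⟨e, he⟩ : G.edgeSet)) hLsub with hL'
    have hmapval : L'.map Subtype.val = L := by
      rw [hL', List.map_pmap]
      exact (List.pmap_eq_map _).trans (List.map_id L)
    have hL'ne : L' ≠ [] := by
      intro h
      apply hLne
      rw [← hmapval, h, List.map_nil]
    have hL'nd : L'.Nodup := List.Nodup.of_map Subtype.val (hmapval.symm ▸ hLnd)
    have hL'len : 3 ≤ L'.length := by
      rw [hL', List.length_pmap]; exact hL3
    have hL'ch : List.Chain' G.lineGraph.Adj L' := by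
      have h1 : List.Chain' (fun e f => e ≠ f ∧ Shares e f) L := chain'_and_ne hLch hLnd
      have h2 : List.Chain' (fun e f => e ≠ f ∧ Shares e f) (L'.map Subtype.val) := by
        rw [hmapval]; exact h1
      rw [List.Chain', List.isChain_map] at h2
      refine h2.imp ?_
      rintro e f ⟨hne, v, hv1, hv2⟩
      rw [lineGraph_adj_iff_exists]
      exact ⟨fun h => hne (congrArg Subtype.val h), v, hv1, hv2⟩
    have hvhead : (L'.head hL'ne : Sym2 V) = L.head hLne := by
      have := List.head?_map (f := (Subtype.val : G.edgeSet → Sym2 V)) (l := L')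
      rw [hmapval, List.head?_eq_head hLne, List.head?_eq_head hL'ne] at this
      simpa using this.symm
    have hvlast : (L'.getLast hL'ne : Sym2 V) = L.getLast hLne := by
      have := List.getLast?_map (f := (Subtype.val : G.edgeSet → Sym2 V)) (l := L')
      rw [hmapval, List.getLast?_eq_getLast hLne, List.getLast?_eq_getLast hL'ne] at this
      simpa using this.symm
    have hwrap : G.lineGraph.Adj (L'.getLast hL'ne) (L'.head hL'ne) := by
      rw [lineGraph_adj_iff_exists]
      refine ⟨?_, u, by rw [hvlast]; exact hlast, by rw [hvhead]; exact hhead⟩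
      intro h
      have : L.getLast hLne = L.head hLne := by rw [← hvlast, ← hvhead, h]
      exact getLast_ne_head hLnd (by omega) hLne this
    have hL'cov : ∀ x : G.edgeSet, x ∈ L' := by
      intro x
      have : (x : Sym2 V) ∈ L'.map Subtype.val := by rw [hmapval]; exact hLcov x.1 x.2
      obtain ⟨y, hy, hyx⟩ := List.mem_map.mp this
      exact (Subtype.ext hyx : y = x) ▸ hy
    exact hamOfList L' hL'ne hL'nd hL'len hL'ch hwrap hL'cov
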